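/- arXiv:2208.06490 — 2 statements merged into one kernel-verified Lean document; each statement's English description precedes it below -/
import Mathlib

section
/- Let n ≥ m ≥ 0 be integers, τ > 0, s_0 ∈ ℝ, and let a_0,…,a_{n-1} be fixed real numbers. For (b_0,…,b_m) ∈ ℝ^{m+1} write Δ_b(s) = s^n + Σ_{k=0}^{n-1} a_k s^k + e^{-sτ} Σ_{k=0}^{m} b_k s^k, and let (b_0*,…,b_m*) be the unique tuple satisfying Δ_{b*}^{(j)}(s_0) = 0 for j = 0,…,m. Then there exist real coefficients b_0,…,b_m such that s_0 is a root of Δ_b of multiplicity at least m + 2 if and only if Δ_{b*}^{(m+1)}(s_0) = 0; moreover, in that case the tuple b must equal b*. -/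
open Polynomial

noncomputable def Lop (τ : ℂ) : Module.End ℂ (Polynomial ℂ) :=
  Polynomial.derivative - τ • 1

lemma Lop_apply (τ : ℂ) (p : Polynomial ℂ) :
    Lop τ p = Polynomial.derivative p - τ • p := by
  simp [Lop, LinearMap.sub_apply]

lemma derivFormula (τ : ℂ) (q p : Polynomial ℂ) :
    deriv (fun s : ℂ => q.eval s + Complex.exp (-(s * τ)) * p.eval s)
      = fun s : ℂ => (Polynomial.derivative q).eval s
          + Complex.exp (-(s * τ)) * ((Lop τ) p).eval s := by
  funext s
  have h2 : HasDerivAt (fun s : ℂ => -(s * τ)) (-τ) s := by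
    exact (((hasDerivAt_id' s).mul_const τ).neg).congr_deriv (by ring)
  have h4 := h2.cexp.mul (p.hasDerivAt s)
  have h5 := (q.hasDerivAt s).add h4
  rw [(show HasDerivAt (fun s : ℂ => q.eval s + Complex.exp (-(s * τ)) * p.eval s) _ s from h5).deriv, Lop_apply]
  simp [smul_eq_mul]
  ring

lemma iterFormula (τ : ℂ) (j : ℕ) (q p : Polynomial ℂ) :
    iteratedDeriv j (fun s : ℂ => q.eval s + Complex.exp (-(s * τ)) * p.eval s)
      = fun s : ℂ => (Polynomial.derivative^[j] q).eval s
          + Complex.exp (-(s * τ)) * ((Lop τ ^ j) p).eval s := by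
  induction j generalizing q p with
  | zero => simp
  | succ j ih =>
    rw [iteratedDeriv_succ', derivFormula, ih]
    funext s
    rw [← Function.iterate_succ_apply, ← Module.End.mul_apply, ← pow_succ]

lemma vanish (m : ℕ) (τ s₀ : ℂ) (p : Polynomial ℂ)
    (h : ∀ j ≤ m, ((Lop τ ^ j) p).eval s₀ = 0) :
    ∀ i ≤ m, (Polynomial.derivative^[i] p).eval s₀ = 0 := by
  intro i hi
  have hd : (Polynomial.derivative : Module.End ℂ (Polynomial ℂ)) = Lop τ + τ • 1 := by
    simp [Lop]
  have hcomm : Commute (Lop τ) (τ • (1 : Module.End ℂ (Polynomial ℂ))) :=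
    (Commute.one_right (Lop τ)).smul_right τ
  have hiter : (Polynomial.derivative^[i] p)
      = ((Polynomial.derivative : Module.End ℂ (Polynomial ℂ)) ^ i) p := by
    simp [Module.End.pow_apply]
  rw [hiter, hd, hcomm.add_pow]
  simp only [LinearMap.coe_sum, Finset.sum_apply, Polynomial.eval_finset_sum]
  apply Finset.sum_eq_zero
  intro k hk
  have hk' : k ≤ m := le_trans (Nat.lt_succ_iff.mp (Finset.mem_range.mp hk)) hi
  rw [Module.End.mul_apply, Module.End.mul_apply, Module.End.natCast_apply]
  simp only [_root_.smul_pow, one_pow, LinearMap.smul_apply, Module.End.one_apply,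
    map_smul, map_nsmul, Polynomial.eval_smul, h k hk', smul_zero]

lemma polyZero (m : ℕ) (s₀ : ℂ) (p : Polynomial ℂ) (hdeg : p.natDegree ≤ m)
    (h : ∀ i ≤ m, (Polynomial.derivative^[i] p).eval s₀ = 0) : p = 0 := by
  have htay : Polynomial.taylor s₀ p = 0 := by
    ext i
    rcases le_or_gt i m with him | him
    · rw [Polynomial.taylor_coeff, Polynomial.coeff_zero]
      have hfac := congrFun (Polynomial.factorial_smul_hasseDeriv (R := ℂ) i) p
      simp only [LinearMap.smul_apply] at hfac
      have h2 := congrArg (Polynomial.eval s₀) hfac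
      rw [h i him, Polynomial.eval_smul] at h2
      have hne : (i.factorial : ℂ) ≠ 0 := Nat.cast_ne_zero.mpr i.factorial_ne_zero
      have := h2
      rw [nsmul_eq_mul] at this
      exact (mul_eq_zero.mp this).resolve_left hne
    · rw [Polynomial.coeff_eq_zero_of_natDegree_lt, Polynomial.coeff_zero]
      rw [Polynomial.natDegree_taylor]
      omega
  exact Polynomial.taylor_injective s₀ (by rw [map_zero, htay])

lemma coeff_sum (m : ℕ) (c : Fin (m + 1) → ℂ) (k : Fin (m + 1)) :
    (∑ j : Fin (m + 1), Polynomial.C (c j) * Polynomial.X ^ (j : ℕ)).coeff (k : ℕ) = c k := by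
  rw [Polynomial.finset_sum_coeff]
  simp only [Polynomial.coeff_C_mul, Polynomial.coeff_X_pow]
  rw [Finset.sum_eq_single k]
  · simp
  · intro j _ hj
    rw [if_neg (fun h => hj (Fin.val_injective h.symm)), mul_zero]
  · simp

lemma deg_sum (m : ℕ) (c : Fin (m + 1) → ℂ) :
    (∑ j : Fin (m + 1), Polynomial.C (c j) * Polynomial.X ^ (j : ℕ)).natDegree ≤ m := by
  apply Polynomial.natDegree_sum_le_of_forall_le
  intro j _
  refine le_trans (Polynomial.natDegree_mul_le) ?_
  simp [Polynomial.natDegree_X_pow]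
  exact j.is_le


/-- Let `n ≥ m ≥ 0`, `τ > 0`, `s₀ ∈ ℝ`, and fix real coefficients
`a_0, …, a_{n-1}`. For a tuple `b = (b_0, …, b_m)` write
`Δ_b(s) = s^n + ∑_{k=0}^{n-1} a_k s^k + e^{-sτ} ∑_{k=0}^{m} b_k s^k`,
and let `b*` be the (unique) tuple with `Δ_{b*}^{(j)}(s₀) = 0` for `j = 0, …, m`.
Then some choice of `b` makes `s₀` a root of `Δ_b` of multiplicity at least
`m + 2` if and only if `Δ_{b*}^{(m+1)}(s₀) = 0`; moreover, in that case the
tuple `b` must equal `b*`. -/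
theorem admissibility_criterion
    (n m : ℕ) (hnm : m ≤ n) (τ : ℝ) (hτ : 0 < τ) (s₀ : ℝ) (a : ℕ → ℝ)
    (Δ : (Fin (m + 1) → ℝ) → ℂ → ℂ)
    (hΔ : ∀ b s, Δ b s = s ^ n + (∑ k ∈ Finset.range n, (a k : ℂ) * s ^ k)
      + Complex.exp (-s * (τ : ℂ)) * ∑ k : Fin (m + 1), (b k : ℂ) * s ^ (k : ℕ))
    (bstar : Fin (m + 1) → ℝ)
    (hbstar : ∀ j ≤ m, iteratedDeriv j (Δ bstar) (s₀ : ℂ) = 0) :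
    ((∃ b : Fin (m + 1) → ℝ, ∀ j ≤ m + 1, iteratedDeriv j (Δ b) (s₀ : ℂ) = 0)
        ↔ iteratedDeriv (m + 1) (Δ bstar) (s₀ : ℂ) = 0)
      ∧ ∀ b : Fin (m + 1) → ℝ,
          (∀ j ≤ m + 1, iteratedDeriv j (Δ b) (s₀ : ℂ) = 0) → b = bstar := by
  set q : Polynomial ℂ := Polynomial.X ^ n
      + ∑ k ∈ Finset.range n, Polynomial.C ((a k : ℝ) : ℂ) * Polynomial.X ^ k with hq
  have hfun : ∀ b : Fin (m + 1) → ℝ, Δ b = fun s : ℂ => q.eval s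
      + Complex.exp (-(s * (τ : ℂ)))
        * (∑ k : Fin (m + 1), Polynomial.C ((b k : ℝ) : ℂ) * Polynomial.X ^ (k : ℕ)).eval s := by
    intro b
    funext s
    rw [hΔ, hq]
    simp [Polynomial.eval_finset_sum, neg_mul, add_assoc]
  have hder : ∀ (b : Fin (m + 1) → ℝ) (j : ℕ),
      iteratedDeriv j (Δ b) (s₀ : ℂ)
        = (Polynomial.derivative^[j] q).eval (s₀ : ℂ)
          + Complex.exp (-((s₀ : ℂ) * (τ : ℂ)))
            * ((Lop (τ : ℂ) ^ j)
                (∑ k : Fin (m + 1), Polynomial.C ((b k : ℝ) : ℂ) * Polynomial.X ^ (k : ℕ))).eval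
              (s₀ : ℂ) := by
    intro b j
    rw [hfun b, iterFormula]
  have huniq : ∀ b : Fin (m + 1) → ℝ,
      (∀ j ≤ m, iteratedDeriv j (Δ b) (s₀ : ℂ) = 0) → b = bstar := by
    intro b hb
    set pd : Polynomial ℂ := ∑ k : Fin (m + 1),
        Polynomial.C (((b k : ℝ) : ℂ) - ((bstar k : ℝ) : ℂ)) * Polynomial.X ^ (k : ℕ) with hpd
    have hsub : pd = (∑ k : Fin (m + 1), Polynomial.C ((b k : ℝ) : ℂ) * Polynomial.X ^ (k : ℕ))
        - ∑ k : Fin (m + 1), Polynomial.C ((bstar k : ℝ) : ℂ) * Polynomial.X ^ (k : ℕ) := by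
      rw [hpd, ← Finset.sum_sub_distrib]
      congr 1
      funext k
      rw [map_sub, sub_mul]
    have hvan : ∀ j ≤ m, ((Lop (τ : ℂ) ^ j) pd).eval (s₀ : ℂ) = 0 := by
      intro j hj
      have h1 := hb j hj
      have h2 := hbstar j hj
      rw [hder] at h1 h2
      have hexp : Complex.exp (-((s₀ : ℂ) * (τ : ℂ))) ≠ 0 := Complex.exp_ne_zero _
      rw [hsub, map_sub, Polynomial.eval_sub]
      have h3 : Complex.exp (-((s₀ : ℂ) * (τ : ℂ)))
          * (((Lop (τ : ℂ) ^ j) (∑ k : Fin (m + 1),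
                Polynomial.C ((b k : ℝ) : ℂ) * Polynomial.X ^ (k : ℕ))).eval (s₀ : ℂ)
            - ((Lop (τ : ℂ) ^ j) (∑ k : Fin (m + 1),
                Polynomial.C ((bstar k : ℝ) : ℂ) * Polynomial.X ^ (k : ℕ))).eval (s₀ : ℂ)) = 0 := by
        rw [mul_sub]
        linear_combination h1 - h2
      exact (mul_eq_zero.mp h3).resolve_left hexp
    have hdz : pd = 0 := by
      refine polyZero m (s₀ : ℂ) pd ?_ (vanish m (τ : ℂ) (s₀ : ℂ) pd hvan)
      rw [hpd]; exact deg_sum m _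
    funext k
    have := congrArg (fun r => Polynomial.coeff r (k : ℕ)) hdz
    simp only [hpd] at this
    rw [coeff_sum] at this
    simp only [Polynomial.coeff_zero, sub_eq_zero] at this
    exact_mod_cast this
  constructor
  · constructor
    · rintro ⟨b, hb⟩
      have hbe : b = bstar := huniq b (fun j hj => hb j (le_trans hj (Nat.le_succ m)))
      rw [← hbe]
      exact hb (m + 1) le_rfl
    · intro h
      exact ⟨bstar, fun j hj => by
        rcases Nat.lt_succ_iff_lt_or_eq.mp (Nat.lt_succ_of_le hj) with h' | h'
        · exact hbstar j (Nat.lt_succ_iff.mp h')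
        · rw [h']; exact h⟩
  · intro b hb
    exact huniq b (fun j hj => hb j (le_trans hj (Nat.le_succ m)))
end

section
/- Let τ > 0. There exist s_0 ∈ ℝ and real numbers α, β such that s_0 is a root of multiplicity at least 3 of Δ(s) = s² + 1 + (β + α s) e^{-sτ} if and only if τ ≤ √2. (In particular, the method applies exactly for delays in the interval (0, √2], consistent with the paper's observation that stabilization is possible for delays at most approximately 1.4.) -/
lemma osc_hd1 (t a b s : ℂ) :
    HasDerivAt (fun s : ℂ => s ^ 2 + 1 + (b + a * s) * Complex.exp (-s * t))
      (2*s + (a - t*(b + a*s)) * Complex.exp (-s*t)) s := by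
  have h1 : HasDerivAt (fun s : ℂ => s ^ 2 + 1) (2*s) s := by
    simpa using (hasDerivAt_pow 2 s).add_const 1
  have h2 : HasDerivAt (fun s : ℂ => b + a * s) a s := by
    simpa using ((hasDerivAt_id s).const_mul a).const_add b
  have h3 : HasDerivAt (fun s : ℂ => Complex.exp (-s * t)) (Complex.exp (-s*t) * (-1 * t)) s :=
    (((hasDerivAt_id s).neg).mul_const t).cexp
  have H := h1.add (h2.mul h3)
  exact H.congr_deriv (by ring)

lemma osc_hd2 (t a b s : ℂ) :
    HasDerivAt (fun s : ℂ => 2*s + (a - t*(b + a*s)) * Complex.exp (-s*t))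
      (2 + (-(2*a*t) + t^2*(b + a*s)) * Complex.exp (-s*t)) s := by
  have h1 : HasDerivAt (fun s : ℂ => 2*s) (2:ℂ) s := by
    simpa using (hasDerivAt_id s).const_mul (2:ℂ)
  have h2 : HasDerivAt (fun s : ℂ => a - t*(b + a*s)) (-(t*a)) s := by
    have := ((((hasDerivAt_id s).const_mul a).const_add b).const_mul t).const_sub a
    simpa using this
  have h3 : HasDerivAt (fun s : ℂ => Complex.exp (-s * t)) (Complex.exp (-s*t) * (-1 * t)) s :=
    (((hasDerivAt_id s).neg).mul_const t).cexp
  have H := h1.add (h2.mul h3)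
  exact H.congr_deriv (by ring)

/-- For the delayed-feedback harmonic oscillator with characteristic function
`Δ(s) = s² + 1 + (β + αs) e^{-sτ}` and a given delay `τ > 0`, there exist a
real point `s₀` and real coefficients `α`, `β` making `s₀` a root of `Δ` of
multiplicity at least `3` if and only if `τ ≤ √2`. -/
theorem oscillator_admissible_delay_iff (τ : ℝ) (hτ : 0 < τ) :
    (∃ (s₀ α β : ℝ), ∀ j ≤ 2, iteratedDeriv j
        (fun s : ℂ => s ^ 2 + 1 + ((β : ℂ) + (α : ℂ) * s) * Complex.exp (-s * (τ : ℂ)))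
        (s₀ : ℂ) = 0)
      ↔ τ ≤ Real.sqrt 2 := by
  constructor
  · rintro ⟨s₀, α, β, h⟩
    set f : ℂ → ℂ := fun s : ℂ => s ^ 2 + 1 + ((β : ℂ) + (α : ℂ) * s) * Complex.exp (-s * (τ : ℂ)) with hf
    have Hf : deriv f = fun s : ℂ =>
        2*s + ((α:ℂ) - (τ:ℂ)*((β:ℂ) + (α:ℂ)*s)) * Complex.exp (-s*(τ:ℂ)) :=
      funext fun s => (osc_hd1 (τ:ℂ) (α:ℂ) (β:ℂ) s).deriv
    have h0 : f (s₀:ℂ) = 0 := by simpa [iteratedDeriv_zero] using h 0 (by norm_num)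
    have h1 : (2*(s₀:ℂ) + ((α:ℂ) - (τ:ℂ)*((β:ℂ) + (α:ℂ)*(s₀:ℂ))) * Complex.exp (-(s₀:ℂ)*(τ:ℂ))) = 0 := by
      have := h 1 (by norm_num)
      rw [iteratedDeriv_one, Hf] at this
      exact this
    have h2 : (2 + (-(2*(α:ℂ)*(τ:ℂ)) + (τ:ℂ)^2*((β:ℂ) + (α:ℂ)*(s₀:ℂ))) * Complex.exp (-(s₀:ℂ)*(τ:ℂ))) = 0 := by
      have h2' := h 2 (by norm_num)
      rw [iteratedDeriv_succ, iteratedDeriv_one, Hf] at h2'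
      rw [← (osc_hd2 (τ:ℂ) (α:ℂ) (β:ℂ) (s₀:ℂ)).deriv]
      exact h2'
    have key : ((2 + 4*τ*s₀ + τ^2*(s₀^2+1) : ℝ) : ℂ) = 0 := by
      have h0' : ((s₀:ℂ)^2 + 1 + ((β:ℂ) + (α:ℂ)*(s₀:ℂ)) * Complex.exp (-(s₀:ℂ)*(τ:ℂ))) = 0 := h0
      push_cast
      linear_combination h2 + 2*(τ:ℂ)*h1 + (τ:ℂ)^2*h0'
    have keyR : 2 + 4*τ*s₀ + τ^2*(s₀^2+1) = 0 := by exact_mod_cast key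
    have hτ2 : τ^2 ≤ 2 := by nlinarith [sq_nonneg (τ*s₀+2)]
    nlinarith [Real.sq_sqrt (by norm_num : (2:ℝ) ≥ 0), Real.sqrt_nonneg 2]
  · intro hτ2
    have h2τ : 0 ≤ 2 - τ^2 := by
      nlinarith [Real.sq_sqrt (by norm_num : (0:ℝ) ≤ 2), Real.sqrt_nonneg 2]
    set c := Real.sqrt (2 - τ^2) with hcdef
    have hc : c^2 = 2 - τ^2 := Real.sq_sqrt h2τ
    set s₀ := (-2 + c)/τ with hs₀
    have hs : τ*s₀ + 2 = c := by rw [hs₀]; field_simp; ring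
    have h4 : (τ*s₀ + 2)^2 = 2 - τ^2 := by rw [hs]; exact hc
    have key : 2 + 4*τ*s₀ + τ^2*(s₀^2+1) = 0 := by linear_combination h4
    set E := Real.exp (-(s₀*τ)) with hE
    have hEpos : 0 < E := Real.exp_pos _
    have hEne : E ≠ 0 := ne_of_gt hEpos
    set α := (-2*s₀ - τ*(s₀^2+1))/E with hα
    set β := (-(s₀^2+1))/E - α*s₀ with hβ
    have hexp : Complex.exp (-(s₀:ℂ)*(τ:ℂ)) = (E:ℂ) := by
      rw [show (-(s₀:ℂ)*(τ:ℂ)) = ((-(s₀*τ) : ℝ) : ℂ) by push_cast; ring, Complex.ofReal_exp]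
    refine ⟨s₀, α, β, ?_⟩
    have hBE : (β + α*s₀)*E = -(s₀^2+1) := by
      rw [hβ]; field_simp; ring
    have hAE : α*E = -2*s₀ - τ*(s₀^2+1) := by
      rw [hα]; field_simp
    intro j hj
    have Hf : deriv (fun s : ℂ => s ^ 2 + 1 + ((β : ℂ) + (α : ℂ) * s) * Complex.exp (-s * (τ : ℂ)))
        = fun s : ℂ => 2*s + ((α:ℂ) - (τ:ℂ)*((β:ℂ) + (α:ℂ)*s)) * Complex.exp (-s*(τ:ℂ)) :=
      funext fun s => (osc_hd1 (τ:ℂ) (α:ℂ) (β:ℂ) s).deriv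
    interval_cases j
    · rw [iteratedDeriv_zero]
      simp only [hexp]
      have h : s₀^2 + 1 + (β + α*s₀)*E = 0 := by rw [hBE]; ring
      exact_mod_cast h
    · rw [iteratedDeriv_one, Hf]
      simp only [hexp]
      have h : 2*s₀ + (α - τ*(β + α*s₀))*E = 0 := by linear_combination hAE - τ*hBE
      exact_mod_cast h
    · rw [iteratedDeriv_succ, iteratedDeriv_one, Hf,
        (osc_hd2 (τ:ℂ) (α:ℂ) (β:ℂ) (s₀:ℂ)).deriv]
      simp only [hexp]
      have h : 2 + (-(2*α*τ) + τ^2*(β + α*s₀))*E = 0 := by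
        linear_combination -2*τ*hAE + τ^2*hBE + key
      exact_mod_cast h
end
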